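/- The CLUB estimator is an upper bound on mutual information: I(x;y) ≤ E_{p(x,y)}[log p(y|x)] − E_{p(x)p(y)}[log p(y|x)], where p(y|x) is the true conditional distribution. -/

import Mathlib

/-- Probability of the event `f = b` under weight function `μ` (the pmf of `f`). -/
noncomputable def margPMF {Ω β : Type*} [Fintype Ω] [DecidableEq β]
    (μ : Ω → ℝ) (f : Ω → β) (b : β) : ℝ :=
  ∑ ω, if f ω = b then μ ω else 0

/-- Joint pmf of the family of random variables `x`. -/
noncomputable def jointPMF {Ω ι α : Type*} [Fintype Ω] [Fintype ι] [DecidableEq ι]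
    [DecidableEq α] (μ : Ω → ℝ) (x : ι → Ω → α) (v : ι → α) : ℝ :=
  margPMF μ (fun ω i => x i ω) v

/-- Total correlation: expectation of the log-ratio of the joint pmf to the
product of marginal pmfs. -/
noncomputable def totalCorr {Ω ι α : Type*} [Fintype Ω] [Fintype ι] [DecidableEq ι]
    [DecidableEq α] (μ : Ω → ℝ) (x : ι → Ω → α) : ℝ :=
  ∑ ω, μ ω * Real.log (jointPMF μ x (fun i => x i ω) / ∏ i, margPMF μ (x i) (x i ω))

/-- Mutual information between random variables `u` and `v`. -/
noncomputable def MI {Ω β γ : Type*} [Fintype Ω] [DecidableEq β] [DecidableEq γ]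
    (μ : Ω → ℝ) (u : Ω → β) (v : Ω → γ) : ℝ :=
  ∑ ω, μ ω * Real.log (margPMF μ (fun ω => (u ω, v ω)) (u ω, v ω) /
    (margPMF μ u (u ω) * margPMF μ v (v ω)))


lemma club_push {Ω C : Type*} [Fintype Ω] [Fintype C] [DecidableEq C]
    (μ : Ω → ℝ) (x : Ω → C) (g : C → ℝ) :
    ∑ ω, μ ω * g (x ω) = ∑ c, margPMF μ x c * g c := by
  unfold margPMF
  simp_rw [Finset.sum_mul, ite_mul, zero_mul]
  rw [Finset.sum_comm]
  simp [Finset.sum_ite_eq]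

lemma club_marg_fst {Ω β γ : Type*} [Fintype Ω] [Fintype γ] [DecidableEq β] [DecidableEq γ]
    (μ : Ω → ℝ) (u : Ω → β) (v : Ω → γ) (a : β) :
    margPMF μ u a = ∑ b, margPMF μ (fun ω => (u ω, v ω)) (a, b) := by
  unfold margPMF
  rw [Finset.sum_comm]
  simp [Prod.mk.injEq, ite_and, Finset.sum_ite_eq]

lemma club_marg_snd {Ω β γ : Type*} [Fintype Ω] [Fintype β] [DecidableEq β] [DecidableEq γ]
    (μ : Ω → ℝ) (u : Ω → β) (v : Ω → γ) (b : γ) :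
    margPMF μ v b = ∑ a, margPMF μ (fun ω => (u ω, v ω)) (a, b) := by
  unfold margPMF
  rw [Finset.sum_comm]
  simp [Prod.mk.injEq, ite_and, Finset.sum_ite_eq]

/-- **CLUB upper bound on mutual information.** With the true conditional
`p(y|x) = p(x,y)/p(x)` (all joint probabilities assumed strictly positive, so
that in particular both marginals are strictly positive),
`I(x;y) ≤ E_{p(x,y)}[log p(y|x)] − E_{p(x)p(y)}[log p(y|x)]`. -/
theorem club_upper_bound {Ω β γ : Type*} [Fintype Ω] [Fintype β] [Fintype γ]
    [DecidableEq β] [DecidableEq γ]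
    (μ : Ω → ℝ) (hμ : ∀ ω, 0 ≤ μ ω) (hsum : ∑ ω, μ ω = 1)
    (u : Ω → β) (v : Ω → γ)
    (hpos : ∀ a b, 0 < margPMF μ (fun ω => (u ω, v ω)) (a, b)) :
    MI μ u v ≤
      (∑ ω, μ ω *
          Real.log (margPMF μ (fun ω => (u ω, v ω)) (u ω, v ω) / margPMF μ u (u ω))) -
        ∑ a, ∑ b, margPMF μ u a * margPMF μ v b *
          Real.log (margPMF μ (fun ω => (u ω, v ω)) (a, b) / margPMF μ u a) := by
  classical
  set J : β → γ → ℝ := fun a b => margPMF μ (fun ω => (u ω, v ω)) (a, b) with hJdef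
  set P : β → ℝ := fun a => margPMF μ u a with hPdef
  set Q : γ → ℝ := fun b => margPMF μ v b with hQdef
  have hΩ : Nonempty Ω := by
    by_contra h
    rw [not_nonempty_iff] at h
    simp at hsum
  have hJpos : ∀ a b, 0 < J a b := hpos
  have hPsum : ∀ a, P a = ∑ b, J a b := fun a => club_marg_fst μ u v a
  have hQsum : ∀ b, Q b = ∑ a, J a b := fun b => club_marg_snd μ u v b
  have hPpos : ∀ a, 0 < P a := fun a => by
    rw [hPsum]
    exact Finset.sum_pos (fun b _ => hJpos a b)
      (Finset.univ_nonempty_iff.mpr ⟨v (Classical.arbitrary Ω)⟩)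
  have hQpos : ∀ b, 0 < Q b := fun b => by
    rw [hQsum]
    exact Finset.sum_pos (fun a _ => hJpos a b)
      (Finset.univ_nonempty_iff.mpr ⟨u (Classical.arbitrary Ω)⟩)
  -- total masses
  have hP1 : ∑ a, P a = 1 := by
    have := club_push μ u (fun _ => (1:ℝ))
    simpa [hsum] using this.symm
  have hQ1 : ∑ b, Q b = 1 := by
    have := club_push μ v (fun _ => (1:ℝ))
    simpa [hsum] using this.symm
  have hJ1 : ∑ a, ∑ b, J a b = 1 := by
    rw [← hP1]
    exact Finset.sum_congr rfl fun a _ => (hPsum a).symm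
  -- rewrite MI and first expectation as double sums
  have hMI : MI μ u v = ∑ a, ∑ b, J a b * Real.log (J a b / (P a * Q b)) := by
    rw [MI, club_push μ (fun ω => (u ω, v ω))
      (fun c => Real.log (margPMF μ (fun ω => (u ω, v ω)) c /
        (margPMF μ u c.1 * margPMF μ v c.2))), Fintype.sum_prod_type]
  have hE1 : (∑ ω, μ ω *
      Real.log (margPMF μ (fun ω => (u ω, v ω)) (u ω, v ω) / margPMF μ u (u ω)))
      = ∑ a, ∑ b, J a b * Real.log (J a b / P a) := by
    rw [club_push μ (fun ω => (u ω, v ω))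
      (fun c => Real.log (margPMF μ (fun ω => (u ω, v ω)) c / margPMF μ u c.1)),
      Fintype.sum_prod_type]
  rw [hMI, hE1]
  -- Step A+B+C : S1 - S3 = ∑∑ P Q log Q
  have hA : (∑ a, ∑ b, J a b * Real.log (J a b / P a))
      - (∑ a, ∑ b, J a b * Real.log (J a b / (P a * Q b)))
      = ∑ a, ∑ b, P a * Q b * Real.log (Q b) := by
    rw [← Finset.sum_sub_distrib]
    have step : ∀ a, (∑ b, J a b * Real.log (J a b / P a))
        - (∑ b, J a b * Real.log (J a b / (P a * Q b)))
        = ∑ b, J a b * Real.log (Q b) := by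
      intro a
      rw [← Finset.sum_sub_distrib]
      refine Finset.sum_congr rfl fun b _ => ?_
      rw [Real.log_div (hJpos a b).ne' (hPpos a).ne',
          Real.log_div (hJpos a b).ne' (mul_pos (hPpos a) (hQpos b)).ne',
          Real.log_mul (hPpos a).ne' (hQpos b).ne']
      ring
    simp_rw [step]
    -- ∑ a ∑ b, J a b * log (Q b) = ∑ a ∑ b, P a * Q b * log (Q b)
    rw [Finset.sum_comm]
    rw [Finset.sum_comm (γ := β)]
    refine Finset.sum_congr rfl fun b _ => ?_
    rw [← Finset.sum_mul, ← hQsum b]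
    rw [show ∑ a, P a * Q b * Real.log (Q b) = (∑ a, P a) * (Q b * Real.log (Q b)) by
      rw [Finset.sum_mul]; exact Finset.sum_congr rfl fun a _ => by ring]
    rw [hP1]; ring
  -- Gibbs inequality
  have hGibbs : ∑ a, ∑ b, P a * Q b * Real.log (J a b / (P a * Q b)) ≤ 0 := by
    have hle : ∀ a b, P a * Q b * Real.log (J a b / (P a * Q b)) ≤ J a b - P a * Q b := by
      intro a b
      have hpq : 0 < P a * Q b := mul_pos (hPpos a) (hQpos b)
      have h1 : Real.log (J a b / (P a * Q b)) ≤ J a b / (P a * Q b) - 1 :=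
        Real.log_le_sub_one_of_pos (div_pos (hJpos a b) hpq)
      calc P a * Q b * Real.log (J a b / (P a * Q b))
          ≤ P a * Q b * (J a b / (P a * Q b) - 1) := by
            exact mul_le_mul_of_nonneg_left h1 hpq.le
        _ = J a b - P a * Q b := by rw [mul_sub, mul_one, mul_div_assoc', mul_div_cancel_left₀ _ hpq.ne']
    calc ∑ a, ∑ b, P a * Q b * Real.log (J a b / (P a * Q b))
        ≤ ∑ a, ∑ b, (J a b - P a * Q b) :=
          Finset.sum_le_sum fun a _ => Finset.sum_le_sum fun b _ => hle a b
      _ = (∑ a, ∑ b, J a b) - ∑ a, ∑ b, P a * Q b := by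
          rw [← Finset.sum_sub_distrib]
          exact Finset.sum_congr rfl fun a _ => Finset.sum_sub_distrib _ _
      _ = 0 := by
          rw [hJ1]
          simp_rw [← Finset.mul_sum, hQ1, mul_one, hP1]
          norm_num
  -- split the Gibbs sum
  have hsplit : ∑ a, ∑ b, P a * Q b * Real.log (J a b / (P a * Q b))
      = (∑ a, ∑ b, P a * Q b * Real.log (J a b / P a))
        - ∑ a, ∑ b, P a * Q b * Real.log (Q b) := by
    rw [← Finset.sum_sub_distrib]
    refine Finset.sum_congr rfl fun a _ => ?_
    rw [← Finset.sum_sub_distrib]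
    refine Finset.sum_congr rfl fun b _ => ?_
    rw [Real.log_div (hJpos a b).ne' (mul_pos (hPpos a) (hQpos b)).ne',
        Real.log_mul (hPpos a).ne' (hQpos b).ne',
        Real.log_div (hJpos a b).ne' (hPpos a).ne']
    ring
  linarith
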